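/- Let 𝔽_q be a finite field, F = 𝔽_q(T), N a finite Galois extension of F, and K, L intermediate fields of N/F whose fixing subgroups H_K = Gal(N/K) and H_L = Gal(N/L) are Gassmann equivalent in G = Gal(N/F). Then K and L have the same field of constants; precisely, the set {x ∈ N : x ∈ K and x is algebraic over 𝔽_q} equals the set {x ∈ N : x ∈ L and x is algebraic over 𝔽_q}. -/

import Mathlib

/-- Two subgroups `H` and `H'` of a group `G` are Gassmann equivalent if every
`g : G` is conjugate to the same number of elements of `H` as of `H'`. -/
def IsGassmannEquiv {G : Type*} [Group G] (H H' : Subgroup G) : Prop :=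
  ∀ g : G, Nat.card {h : H // IsConj g (h : G)} = Nat.card {h : H' // IsConj g (h : G)}

lemma isGassmannEquiv_symm {G : Type*} [Group G] {H H' : Subgroup G}
    (h : IsGassmannEquiv H H') : IsGassmannEquiv H' H := fun g => (h g).symm

/-- Over a finite base field, any root of the minimal polynomial of `x` lies in the
field generated by `x` (finite extensions of finite fields are normal). -/
lemma root_mem_adjoin_of_finite {Fq N : Type*} [Field Fq] [Fintype Fq] [Field N]
    [Algebra Fq N] {x y : N} (hx : IsIntegral Fq x)
    (hy : Polynomial.aeval y (minpoly Fq x) = 0) :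
    y ∈ IntermediateField.adjoin Fq {x} := by
  classical
  set A := IntermediateField.adjoin Fq {x} with hA
  haveI : FiniteDimensional Fq A := IntermediateField.adjoin.finiteDimensional hx
  haveI : Finite A := Module.finite_of_finite Fq
  haveI : Fintype A := Fintype.ofFinite A
  set Q := Fintype.card A with hQdef
  have hQ2 : 1 < Q := Fintype.one_lt_card
  have hpow : ∀ a : A, (a : N) ^ Q = (a : N) := by
    intro a
    have := FiniteField.pow_card a
    exact_mod_cast congrArg Subtype.val this
  have hxA : x ∈ A := IntermediateField.mem_adjoin_simple_self Fq x
  have hxQ : x ^ Q = x := hpow ⟨x, hxA⟩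
  have hdvd : minpoly Fq x ∣ (Polynomial.X ^ Q - Polynomial.X : Polynomial Fq) :=
    minpoly.dvd Fq x (by simp [hxQ])
  have hyQ : y ^ Q = y := by
    obtain ⟨c, hc⟩ := hdvd
    have h0 : Polynomial.aeval y (Polynomial.X ^ Q - Polynomial.X : Polynomial Fq) = 0 := by
      rw [hc, map_mul, hy, zero_mul]
    have : y ^ Q - y = 0 := by simpa using h0
    linear_combination this
  set p : Polynomial N := Polynomial.X ^ Q - Polynomial.X with hp
  have hpdeg : p.natDegree = Q := by
    rw [hp]
    rw [Polynomial.natDegree_sub_eq_left_of_natDegree_lt]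
    · exact Polynomial.natDegree_X_pow Q
    · simpa [Polynomial.natDegree_X_pow] using hQ2
  have hpne : p ≠ 0 := fun h => by simp [h] at hpdeg; omega
  have hroot : ∀ z : N, z ^ Q = z → z ∈ p.roots := by
    intro z hz
    rw [Polynomial.mem_roots hpne]
    simp [hp, Polynomial.IsRoot, hz]
  set S : Finset N := p.roots.toFinset with hS
  have hScard : S.card ≤ Q := by
    calc S.card ≤ Multiset.card p.roots := Multiset.toFinset_card_le _
    _ ≤ p.natDegree := Polynomial.card_roots' p
    _ = Q := hpdeg
  set T : Finset N := Finset.univ.image (fun a : A => (a : N)) with hT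
  have hTcard : T.card = Q := by
    rw [hT, Finset.card_image_of_injective _ Subtype.val_injective, Finset.card_univ]
  have hTS : T ⊆ S := by
    intro z hz
    rw [hT, Finset.mem_image] at hz
    obtain ⟨a, -, rfl⟩ := hz
    exact Multiset.mem_toFinset.mpr (hroot _ (hpow a))
  have hST : S = T := (Finset.eq_of_subset_of_card_le hTS (hScard.trans hTcard.ge)).symm
  have hyS : y ∈ S := Multiset.mem_toFinset.mpr (hroot y hyQ)
  rw [hST, hT, Finset.mem_image] at hyS
  obtain ⟨a, -, ha⟩ := hyS
  rw [← ha]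
  exact a.2

set_option synthInstance.maxHeartbeats 1000000 in
/-- Intermediate fields of a finite Galois extension of `𝔽_q(T)` with Gassmann
equivalent fixing subgroups have the same field of constants: the elements of `K`
algebraic over `𝔽_q` coincide with the elements of `L` algebraic over `𝔽_q`. -/
theorem constants_eq_of_gassmann_equiv
    (Fq : Type) [Field Fq] [Fintype Fq]
    (N : Type) [Field N] [Algebra (RatFunc Fq) N] [FiniteDimensional (RatFunc Fq) N]
    [IsGalois (RatFunc Fq) N]
    (K L : IntermediateField (RatFunc Fq) N)
    (hGassmann : IsGassmannEquiv K.fixingSubgroup L.fixingSubgroup) :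
    letI : Algebra Fq N :=
      ((algebraMap (RatFunc Fq) N).comp (algebraMap Fq (RatFunc Fq))).toAlgebra
    {x : N | x ∈ K ∧ IsAlgebraic Fq x} = {x : N | x ∈ L ∧ IsAlgebraic Fq x} := by
  letI : Algebra Fq N :=
    ((algebraMap (RatFunc Fq) N).comp (algebraMap Fq (RatFunc Fq))).toAlgebra
  haveI : IsScalarTower Fq (RatFunc Fq) N := IsScalarTower.of_algebraMap_eq fun a => rfl
  haveI : Finite (N ≃ₐ[RatFunc Fq] N) := by infer_instance
  have key : ∀ (K L : IntermediateField (RatFunc Fq) N),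
      IsGassmannEquiv K.fixingSubgroup L.fixingSubgroup →
      ∀ x : N, x ∈ K ∧ IsAlgebraic Fq x → x ∈ L ∧ IsAlgebraic Fq x := by
    intro K L hG x hx
    obtain ⟨hxK, hxalg⟩ := hx
    refine ⟨?_, hxalg⟩
    have hint : IsIntegral Fq x := hxalg.isIntegral
    have hfix : ∀ τ ∈ L.fixingSubgroup, τ x = x := by
      intro τ hτ
      have h1 : Nonempty {h : L.fixingSubgroup // IsConj τ (h : N ≃ₐ[RatFunc Fq] N)} :=
        ⟨⟨⟨τ, hτ⟩, IsConj.refl τ⟩⟩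
      have h2 : 0 < Nat.card {h : K.fixingSubgroup // IsConj τ (h : N ≃ₐ[RatFunc Fq] N)} := by
        rw [hG τ]; exact Nat.card_pos
      obtain ⟨⟨⟨σ, hσ⟩, hconj⟩⟩ := Nat.card_pos_iff.mp h2 |>.1
      obtain ⟨c, hc⟩ := isConj_iff.mp hconj
      -- σ fixes x
      have hσx : σ x = x := by
        rw [IntermediateField.mem_fixingSubgroup_iff] at hσ
        exact hσ x hxK
      -- c x is a root of the minimal polynomial of x over Fq
      have hcx : Polynomial.aeval (c x) (minpoly Fq x) = 0 := by
        have h := Polynomial.aeval_algHom_apply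
          ((AlgEquiv.restrictScalars Fq c).toAlgHom) x (minpoly Fq x)
        simpa [minpoly.aeval] using h
      have hmem : c x ∈ Algebra.adjoin Fq {x} := by
        rw [← IntermediateField.adjoin_simple_toSubalgebra_of_isAlgebraic hxalg,
          IntermediateField.mem_toSubalgebra]
        exact root_mem_adjoin_of_finite hint hcx
      -- σ fixes everything in Fq[x]
      have hσfix : ∀ z ∈ Algebra.adjoin Fq {x}, σ z = z := by
        intro z hz
        induction hz using Algebra.adjoin_induction with
        | mem w hw => rw [Set.mem_singleton_iff] at hw; rw [hw]; exact hσx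
        | algebraMap r =>
            show σ (algebraMap (RatFunc Fq) N (algebraMap Fq (RatFunc Fq) r)) = _
            exact σ.commutes _
        | add a b ha hb ha' hb' => rw [map_add, ha', hb']
        | mul a b ha hb ha' hb' => rw [map_mul, ha', hb']
      have hσcx : σ (c x) = c x := hσfix _ hmem
      -- conclude
      have hc' : c * τ * c⁻¹ = σ := hc
      have hτeq : τ = c⁻¹ * σ * c := by
        rw [← hc']; group
      rw [hτeq]
      show c⁻¹ (σ (c x)) = x
      rw [hσcx]
      exact c.symm_apply_apply x
    have : x ∈ IntermediateField.fixedField L.fixingSubgroup := by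
      intro τ
      exact hfix τ.1 τ.2
    rwa [IsGalois.fixedField_fixingSubgroup L] at this
  ext x
  simp only [Set.mem_setOf_eq]
  exact ⟨key K L hGassmann x, key L K (isGassmannEquiv_symm hGassmann) x⟩
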